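/- Let g ≥ 1 and let R be the quotient of the Laurent polynomial ring ℤ[t,t⁻¹] by the principal ideal generated by (t + 2 + t⁻¹)^g. If P ∈ R satisfies P·P = d·P for some nonzero integer d, then P = 0 or P = d·1 in R. -/

import Mathlib

open LaurentPolynomial

namespace Statement0Aux
open Polynomial

private lemma aux_nilp_zero {S : Type*} [CommRing S] [NoZeroSMulDivisors ℤ S]
    {d : ℤ} (hd : d ≠ 0) {Q : S} (hQ : Q * Q = (d : S) * Q) (hn : IsNilpotent Q) :
    Q = 0 := by
  obtain ⟨m, hm⟩ := hn
  have key : ∀ n : ℕ, Q ^ (n + 1) = (d : S) ^ n * Q := by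
    intro n
    induction n with
    | zero => simp
    | succ n ih =>
      have e : Q ^ (n + 1 + 1) = Q ^ (n + 1) * Q := by ring
      rw [e, ih, mul_assoc, hQ, pow_succ]
      ring
  have h0 : (d : S) ^ m * Q = 0 := by
    rw [← key m, pow_succ, hm, zero_mul]
  have h1 : (d ^ m : ℤ) • Q = 0 := by
    rw [zsmul_eq_mul]
    push_cast
    exact h0
  rcases smul_eq_zero.mp h1 with h | h
  · exact absurd h (pow_ne_zero _ hd)
  · exact h

noncomputable abbrev uL : LaurentPolynomial ℤ := T 1 + 2 + T (-1)

noncomputable abbrev IL (g : ℕ) : Ideal (LaurentPolynomial ℤ) := Ideal.span {uL ^ g}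

noncomputable abbrev fP (g : ℕ) : ℤ[X] := (X + 1) ^ (2 * g)

abbrev S (g : ℕ) := AdjoinRoot (fP g)

private lemma fP_monic (g : ℕ) : (fP g).Monic := by
  have : (X + 1 : ℤ[X]).Monic := by simpa using Polynomial.monic_X_add_C (1 : ℤ)
  exact this.pow _

private lemma root1_pow (g : ℕ) : (AdjoinRoot.root (fP g) + 1) ^ (2 * g) = 0 := by
  have h : (AdjoinRoot.mk (fP g)) (fP g) = 0 := AdjoinRoot.mk_self
  rw [show fP g = (X + 1) ^ (2 * g) from rfl, map_pow, map_add, map_one,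
    AdjoinRoot.mk_X] at h
  exact h

private lemma root_unit (g : ℕ) : IsUnit (AdjoinRoot.root (fP g)) := by
  have hn : IsNilpotent (AdjoinRoot.root (fP g) + 1) := ⟨2 * g, root1_pow g⟩
  have := hn.isUnit_sub_one
  simpa using this

private lemma hunits (g : ℕ) : ∀ y : Submonoid.powers (X : ℤ[X]),
    IsUnit ((AdjoinRoot.mk (fP g)) (y : ℤ[X])) := by
  rintro ⟨y, n, rfl⟩
  rw [map_pow, AdjoinRoot.mk_X]
  exact (root_unit g).pow n

noncomputable def ψ (g : ℕ) : LaurentPolynomial ℤ →+* S g :=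
  haveI := LaurentPolynomial.isLocalization (R := ℤ)
  IsLocalization.lift (S := LaurentPolynomial ℤ) (hunits g)

private lemma ψ_alg (g : ℕ) (p : ℤ[X]) :
    ψ g (algebraMap ℤ[X] (LaurentPolynomial ℤ) p) = AdjoinRoot.mk (fP g) p :=
  haveI := LaurentPolynomial.isLocalization (R := ℤ)
  IsLocalization.lift_eq (hunits g) p

private lemma ψ_T1 (g : ℕ) : ψ g (T 1) = AdjoinRoot.root (fP g) := by
  have := ψ_alg g X
  rwa [LaurentPolynomial.algebraMap_eq_toLaurent, Polynomial.toLaurent_X] at this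

private lemma ψ_Tm1 (g : ℕ) : ψ g (T (-1)) * AdjoinRoot.root (fP g) = 1 := by
  have h : ψ g (T (-1)) * ψ g (T 1) = 1 := by
    rw [← map_mul, ← LaurentPolynomial.T_add]
    norm_num
  rwa [ψ_T1] at h

private lemma T1_sq : (T 1 + 1 : LaurentPolynomial ℤ) ^ 2 = T 1 * uL := by
  have e2 : (T 1 : LaurentPolynomial ℤ) * T (-1) = 1 := by
    rw [← LaurentPolynomial.T_add]; norm_num
  calc (T 1 + 1 : LaurentPolynomial ℤ) ^ 2
      = T 1 * T 1 + 2 * T 1 + 1 := by ring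
    _ = T 1 * T 1 + 2 * T 1 + T 1 * T (-1) := by rw [e2]
    _ = T 1 * uL := by rw [show uL = T 1 + 2 + T (-1) from rfl]; ring

private lemma T1_pow (g : ℕ) :
    (T 1 + 1 : LaurentPolynomial ℤ) ^ (2 * g) = T (g : ℤ) * uL ^ g := by
  have e3 : (T 1 : LaurentPolynomial ℤ) ^ g = T (g : ℤ) := by
    rw [LaurentPolynomial.T_pow]; norm_num
  calc (T 1 + 1 : LaurentPolynomial ℤ) ^ (2 * g)
      = ((T 1 + 1 : LaurentPolynomial ℤ) ^ 2) ^ g := by rw [← pow_mul]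
    _ = (T 1 * uL) ^ g := by rw [T1_sq]
    _ = T (g : ℤ) * uL ^ g := by rw [mul_pow, e3]

private lemma ψ_u_root (g : ℕ) :
    ψ g uL * AdjoinRoot.root (fP g) = (AdjoinRoot.root (fP g) + 1) ^ 2 := by
  have e : ψ g uL = AdjoinRoot.root (fP g) + 2 + ψ g (T (-1)) := by
    rw [show uL = T 1 + 2 + T (-1) from rfl, map_add, map_add, ψ_T1, map_ofNat]
  rw [e, add_mul, add_mul, ψ_Tm1]
  ring

private lemma ψ_ug (g : ℕ) : ψ g (uL ^ g) = 0 := by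
  have h1 : ψ g uL ^ g * AdjoinRoot.root (fP g) ^ g = 0 := by
    rw [← mul_pow, ψ_u_root, ← pow_mul, root1_pow]
  have h2 : AdjoinRoot.root (fP g) ^ g * ψ g uL ^ g
      = AdjoinRoot.root (fP g) ^ g * 0 := by
    rw [mul_zero, mul_comm]; exact h1
  rw [map_pow]
  exact ((root_unit g).pow g).mul_left_cancel h2

private lemma IL_ker (g : ℕ) : ∀ a ∈ IL g, ψ g a = 0 := by
  intro a ha
  rw [Ideal.mem_span_singleton'] at ha
  obtain ⟨c, rfl⟩ := ha
  rw [map_mul, ψ_ug, mul_zero]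

noncomputable def ψbar (g : ℕ) : (LaurentPolynomial ℤ ⧸ IL g) →+* S g :=
  Ideal.Quotient.lift (IL g) (ψ g) (IL_ker g)

private lemma χ_cond (g : ℕ) :
    Polynomial.eval₂ (Int.castRingHom (LaurentPolynomial ℤ ⧸ IL g))
      (Ideal.Quotient.mk (IL g) (T 1)) (fP g) = 0 := by
  rw [show fP g = (X + 1) ^ (2 * g) from rfl, Polynomial.eval₂_pow,
    Polynomial.eval₂_add, Polynomial.eval₂_X, Polynomial.eval₂_one,
    ← map_one (Ideal.Quotient.mk (IL g)), ← map_add, ← map_pow, T1_pow, map_mul]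
  have h0 : (Ideal.Quotient.mk (IL g)) (uL ^ g) = 0 := by
    rw [Ideal.Quotient.eq_zero_iff_mem]
    exact Ideal.subset_span rfl
  rw [h0, mul_zero]

noncomputable def χ (g : ℕ) : S g →+* (LaurentPolynomial ℤ ⧸ IL g) :=
  AdjoinRoot.lift (Int.castRingHom _) (Ideal.Quotient.mk (IL g) (T 1)) (χ_cond g)

private lemma section_eq (g : ℕ) (x : LaurentPolynomial ℤ) :
    χ g (ψ g x) = Ideal.Quotient.mk (IL g) x := by
  haveI := LaurentPolynomial.isLocalization (R := ℤ)
  have hcomp : (χ g).comp (ψ g)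
      = (Ideal.Quotient.mk (IL g) : LaurentPolynomial ℤ →+* _) := by
    apply IsLocalization.ringHom_ext (Submonoid.powers (X : ℤ[X]))
    apply Polynomial.ringHom_ext'
    · ext n
      simp
    · rw [RingHom.comp_apply, RingHom.comp_apply, RingHom.comp_apply, ψ_alg,
        AdjoinRoot.mk_X, χ, AdjoinRoot.lift_root,
        LaurentPolynomial.algebraMap_eq_toLaurent, Polynomial.toLaurent_X]
  exact RingHom.congr_fun hcomp x

private lemma ev_cond (g : ℕ) (hg : 1 ≤ g) :
    Polynomial.eval₂ (RingHom.id ℤ) (-1) (fP g) = 0 := by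
  rw [show fP g = (X + 1) ^ (2 * g) from rfl, Polynomial.eval₂_pow,
    Polynomial.eval₂_add, Polynomial.eval₂_X, Polynomial.eval₂_one]
  rw [neg_add_cancel]
  exact zero_pow (by omega)

noncomputable def ev (g : ℕ) (hg : 1 ≤ g) : S g →+* ℤ :=
  AdjoinRoot.lift (RingHom.id ℤ) (-1) (ev_cond g hg)

private lemma ker_nilpotent (g : ℕ) (hg : 1 ≤ g) (s : S g) (hs : ev g hg s = 0) :
    IsNilpotent s := by
  obtain ⟨p, rfl⟩ := AdjoinRoot.mk_surjective (g := fP g) s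
  rw [ev, AdjoinRoot.lift_mk] at hs
  have hroot : p.IsRoot (-1) := by
    rw [Polynomial.IsRoot, Polynomial.eval, hs]
  obtain ⟨c, hc⟩ := Polynomial.dvd_iff_isRoot.mpr hroot
  refine ⟨2 * g, ?_⟩
  rw [← map_pow, hc, mul_pow]
  have he : (X - Polynomial.C (-1 : ℤ)) ^ (2 * g) = fP g := by
    rw [show fP g = (X + 1) ^ (2 * g) from rfl]
    norm_num
  rw [he, map_mul, AdjoinRoot.mk_self, zero_mul]

end Statement0Aux

open Statement0Aux Polynomial in
/-- Let `g ≥ 1` and let `R` be the quotient of the Laurent polynomial ring `ℤ[t,t⁻¹]` by the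
principal ideal generated by `(t + 2 + t⁻¹)^g`. If `P ∈ R` satisfies `P·P = d·P` for some nonzero
integer `d`, then `P = 0` or `P = d·1` in `R`. -/
theorem statement0 (g : ℕ) (hg : 1 ≤ g) (d : ℤ) (hd : d ≠ 0)
    (P : LaurentPolynomial ℤ ⧸
        Ideal.span {(T 1 + 2 + T (-1) : LaurentPolynomial ℤ) ^ g})
    (h : P * P = (d : LaurentPolynomial ℤ ⧸
        Ideal.span {(T 1 + 2 + T (-1) : LaurentPolynomial ℤ) ^ g}) * P) :
    P = 0 ∨ P = (d : LaurentPolynomial ℤ ⧸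
        Ideal.span {(T 1 + 2 + T (-1) : LaurentPolynomial ℤ) ^ g}) := by
  haveI : NoZeroSMulDivisors ℤ (S g) :=
    ⟨fun h => ((AdjoinRoot.powerBasis' (fP_monic g)).basis.smul_eq_zero).mp h⟩
  have hQ : ψbar g P * ψbar g P = (d : S g) * ψbar g P := by
    have := congrArg (ψbar g) h
    rwa [map_mul, map_mul, map_intCast] at this
  have hq : ev g hg (ψbar g P) * ev g hg (ψbar g P) = d * ev g hg (ψbar g P) := by
    have := congrArg (ev g hg) hQ
    rwa [map_mul, map_mul, map_intCast] at this
  have hq0d : ev g hg (ψbar g P) = 0 ∨ ev g hg (ψbar g P) = d := by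
    have h' : ev g hg (ψbar g P) * (ev g hg (ψbar g P) - d) = 0 := by
      linear_combination hq
    rcases mul_eq_zero.mp h' with h'' | h''
    · exact Or.inl h''
    · exact Or.inr (sub_eq_zero.mp h'')
  obtain ⟨x, rfl⟩ := Ideal.Quotient.mk_surjective P
  have hPQ : χ g (ψbar g (Ideal.Quotient.mk (IL g) x)) = Ideal.Quotient.mk (IL g) x := by
    rw [ψbar, Ideal.Quotient.lift_mk, section_eq]
  rcases hq0d with hcase | hcase
  · left
    have hz : ψbar g (Ideal.Quotient.mk (IL g) x) = 0 :=
      aux_nilp_zero hd hQ (ker_nilpotent g hg _ hcase)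
    rw [← hPQ, hz, map_zero]
  · right
    have hQ' : ((d : S g) - ψbar g (Ideal.Quotient.mk (IL g) x))
        * ((d : S g) - ψbar g (Ideal.Quotient.mk (IL g) x))
        = (d : S g) * ((d : S g) - ψbar g (Ideal.Quotient.mk (IL g) x)) := by
      linear_combination hQ
    have hev' : ev g hg ((d : S g) - ψbar g (Ideal.Quotient.mk (IL g) x)) = 0 := by
      rw [map_sub, map_intCast, Int.cast_id, hcase, sub_self]
    have hz : (d : S g) - ψbar g (Ideal.Quotient.mk (IL g) x) = 0 :=
      aux_nilp_zero hd hQ' (ker_nilpotent g hg _ hev')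
    have hQd : ψbar g (Ideal.Quotient.mk (IL g) x) = (d : S g) := by
      linear_combination -hz
    rw [← hPQ, hQd, map_intCast]
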